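/- The center of H is exactly the subgroup generated by z. -/

import Mathlib

/-- Generators of the group `H`: `x i`, `y i` for `i : Fin 18`, and `z`. -/
inductive HGen : Type
  | x : Fin 18 → HGen
  | y : Fin 18 → HGen
  | z : HGen

/-- The free-group generator corresponding to `x i`. -/
def fx (i : Fin 18) : FreeGroup HGen := FreeGroup.of (HGen.x i)
/-- The free-group generator corresponding to `y i`. -/
def fy (i : Fin 18) : FreeGroup HGen := FreeGroup.of (HGen.y i)
/-- The free-group generator corresponding to `z`. -/
def fz : FreeGroup HGen := FreeGroup.of HGen.z

/-- The relations of the presentation of `H`: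
`[xᵢ, xⱼ] = [yᵢ, yⱼ] = [xᵢ, yⱼ] = 1` for `i ≠ j`, `[xᵢ, yᵢ] = z`,
and `z` commutes with all the generators. -/
def HRels : Set (FreeGroup HGen) :=
  { r | (∃ i j : Fin 18, i ≠ j ∧ r = fx i * fx j * (fx i)⁻¹ * (fx j)⁻¹)
      ∨ (∃ i j : Fin 18, i ≠ j ∧ r = fy i * fy j * (fy i)⁻¹ * (fy j)⁻¹)
      ∨ (∃ i j : Fin 18, i ≠ j ∧ r = fx i * fy j * (fx i)⁻¹ * (fy j)⁻¹)
      ∨ (∃ i : Fin 18, r = fx i * fy i * (fx i)⁻¹ * (fy i)⁻¹ * fz⁻¹)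
      ∨ (∃ i : Fin 18, r = fx i * fz * (fx i)⁻¹ * fz⁻¹)
      ∨ (∃ i : Fin 18, r = fy i * fz * (fy i)⁻¹ * fz⁻¹) }

/-- The group `H`, given by the above presentation. -/
abbrev Hgrp : Type := PresentedGroup HRels

/-- The generator `xᵢ` of `H`. -/
def xH (i : Fin 18) : Hgrp := PresentedGroup.of (HGen.x i)
/-- The generator `yᵢ` of `H`. -/
def yH (i : Fin 18) : Hgrp := PresentedGroup.of (HGen.y i)
/-- The generator `z` of `H`. -/
def zH : Hgrp := PresentedGroup.of HGen.z


namespace HCenterProof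

/-- dot product on `Fin 18 → ℤ` -/
def dd (u v : Fin 18 → ℤ) : ℤ := ∑ i, u i * v i

lemma dd_add_left (u u' v : Fin 18 → ℤ) : dd (u + u') v = dd u v + dd u' v := by
  simp [dd, add_mul, Finset.sum_add_distrib]

lemma dd_add_right (u v v' : Fin 18 → ℤ) : dd u (v + v') = dd u v + dd u v' := by
  simp [dd, mul_add, Finset.sum_add_distrib]

lemma dd_zero_left (v : Fin 18 → ℤ) : dd 0 v = 0 := by simp [dd]
lemma dd_zero_right (u : Fin 18 → ℤ) : dd u 0 = 0 := by simp [dd]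
lemma dd_neg_left (u v : Fin 18 → ℤ) : dd (-u) v = -dd u v := by simp [dd, Finset.sum_neg_distrib]

/-- unit vector -/
def ee (i : Fin 18) : Fin 18 → ℤ := Pi.single i 1

lemma dd_ee_right (u : Fin 18 → ℤ) (i : Fin 18) : dd u (ee i) = u i := by
  simp [dd, ee, Pi.single_apply, mul_ite]

lemma dd_ee_left (v : Fin 18 → ℤ) (i : Fin 18) : dd (ee i) v = v i := by
  simp [dd, ee, Pi.single_apply, ite_mul]

lemma dd_neg_right (u v : Fin 18 → ℤ) : dd u (-v) = -dd u v := by simp [dd]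

lemma dd_ee_ee (i j : Fin 18) : dd (ee i) (ee j) = if i = j then 1 else 0 := by
  rw [dd_ee_right, ee, Pi.single_apply]
  simp [eq_comm]

/-- The concrete Heisenberg group. -/
@[ext] structure Heis where
  a : Fin 18 → ℤ
  b : Fin 18 → ℤ
  c : ℤ

namespace Heis

instance : Mul Heis := ⟨fun p q => ⟨p.a + q.a, p.b + q.b, p.c + q.c + dd p.a q.b⟩⟩
instance : One Heis := ⟨⟨0, 0, 0⟩⟩
instance : Inv Heis := ⟨fun p => ⟨-p.a, -p.b, -p.c + dd p.a p.b⟩⟩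

lemma mul_def (p q : Heis) : p * q = ⟨p.a + q.a, p.b + q.b, p.c + q.c + dd p.a q.b⟩ := rfl
lemma one_def : (1 : Heis) = ⟨0, 0, 0⟩ := rfl
lemma inv_def (p : Heis) : p⁻¹ = ⟨-p.a, -p.b, -p.c + dd p.a p.b⟩ := rfl

instance : Group Heis := by
  refine Group.ofLeftAxioms (fun p q r => ?_) (fun p => ?_) (fun p => ?_) <;>
    ext <;>
    simp [mul_def, one_def, inv_def, dd_add_left, dd_add_right, dd_zero_left, dd_zero_right,
      dd_neg_left, dd_neg_right] <;> ring

lemma commutator_eq (p q : Heis) : p * q * p⁻¹ * q⁻¹ = ⟨0, 0, dd p.a q.b - dd q.a p.b⟩ := by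
  ext <;>
    simp [mul_def, inv_def, dd_add_left, dd_add_right, dd_zero_left, dd_zero_right,
      dd_neg_left, dd_neg_right] <;> ring

end Heis

/-- images of the generators -/
def hgen : HGen → Heis
  | .x i => ⟨ee i, 0, 0⟩
  | .y i => ⟨0, ee i, 0⟩
  | .z => ⟨0, 0, 1⟩

lemma lift_rels : ∀ r ∈ HRels, FreeGroup.lift hgen r = 1 := by
  intro r hr
  rcases hr with ⟨i, j, hij, rfl⟩ | ⟨i, j, hij, rfl⟩ | ⟨i, j, hij, rfl⟩ | ⟨i, rfl⟩ | ⟨i, rfl⟩ |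
    ⟨i, rfl⟩ <;>
    simp only [fx, fy, fz, map_mul, map_inv, FreeGroup.lift_apply_of] <;>
    simp only [hgen]
  · rw [Heis.commutator_eq]; ext <;> simp [Heis.one_def, dd_zero_left, dd_zero_right]
  · rw [Heis.commutator_eq]; ext <;> simp [Heis.one_def, dd_zero_left, dd_zero_right]
  · rw [Heis.commutator_eq]
    ext <;> simp [Heis.one_def, dd_zero_left, dd_zero_right, dd_ee_ee, hij]
  · rw [Heis.commutator_eq, Heis.mul_def, Heis.inv_def]
    ext <;> simp [Heis.one_def, dd_zero_left, dd_zero_right, dd_ee_ee]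
  · rw [Heis.commutator_eq]; ext <;> simp [Heis.one_def, dd_zero_left, dd_zero_right]
  · rw [Heis.commutator_eq]; ext <;> simp [Heis.one_def, dd_zero_left, dd_zero_right]


/-- The homomorphism from `H` to the concrete Heisenberg group. -/
def ψ : Hgrp →* Heis := PresentedGroup.toGroup lift_rels

@[simp] lemma ψ_x (i : Fin 18) : ψ (xH i) = ⟨ee i, 0, 0⟩ := PresentedGroup.toGroup.of lift_rels
@[simp] lemma ψ_y (i : Fin 18) : ψ (yH i) = ⟨0, ee i, 0⟩ := PresentedGroup.toGroup.of lift_rels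
@[simp] lemma ψ_z : ψ zH = ⟨0, 0, 1⟩ := PresentedGroup.toGroup.of lift_rels

lemma rel_one {r : FreeGroup HGen} (hr : r ∈ HRels) : PresentedGroup.mk HRels r = 1 :=
  (QuotientGroup.eq_one_iff r).mpr (Subgroup.subset_normalClosure hr)

lemma comm_of_rel {g h : Hgrp} {r : FreeGroup HGen} (hr : r ∈ HRels)
    (hrw : PresentedGroup.mk HRels r = g * h * g⁻¹ * h⁻¹) : Commute g h := by
  have h1 := rel_one hr
  rw [hrw] at h1
  exact commutatorElement_eq_one_iff_commute.mp h1

lemma xx_comm (i j : Fin 18) : Commute (xH i) (xH j) := by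
  rcases eq_or_ne i j with rfl | h
  · exact Commute.refl _
  · exact comm_of_rel (Or.inl ⟨i, j, h, rfl⟩) (by simp only [map_mul, map_inv]; rfl)

lemma yy_comm (i j : Fin 18) : Commute (yH i) (yH j) := by
  rcases eq_or_ne i j with rfl | h
  · exact Commute.refl _
  · exact comm_of_rel (Or.inr (Or.inl ⟨i, j, h, rfl⟩)) (by simp only [map_mul, map_inv]; rfl)

lemma xy_comm {i j : Fin 18} (h : i ≠ j) : Commute (xH i) (yH j) :=
  comm_of_rel (Or.inr (Or.inr (Or.inl ⟨i, j, h, rfl⟩)))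
    (by simp only [map_mul, map_inv]; rfl)

lemma xz_comm (i : Fin 18) : Commute (xH i) zH :=
  comm_of_rel (Or.inr (Or.inr (Or.inr (Or.inr (Or.inl ⟨i, rfl⟩)))))
    (by simp only [map_mul, map_inv]; rfl)

lemma yz_comm (i : Fin 18) : Commute (yH i) zH :=
  comm_of_rel (Or.inr (Or.inr (Or.inr (Or.inr (Or.inr ⟨i, rfl⟩)))))
    (by simp only [map_mul, map_inv]; rfl)

/-- `z` is central. -/
lemma z_comm (g : Hgrp) : Commute zH g := by
  have key : ∀ s ∈ Subgroup.closure (Set.range (PresentedGroup.of (rels := HRels))),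
      Commute zH s := by
    intro s hs
    induction hs using Subgroup.closure_induction with
    | mem t ht =>
      obtain ⟨w, rfl⟩ := ht
      cases w with
      | x i => exact (xz_comm i).symm
      | y i => exact (yz_comm i).symm
      | z => exact Commute.refl _
    | one => exact Commute.one_right _
    | mul a b _ _ ha hb => exact ha.mul_right hb
    | inv a _ ha => exact ha.inv_right
  exact key g (by rw [PresentedGroup.closure_range_of]; trivial)

lemma zzz (k : ℤ) (g : Hgrp) : zH ^ k * g = g * zH ^ k := ((z_comm g).zpow_left k).eq

lemma zzz' (k : ℤ) (w x : Hgrp) : zH ^ k * (w * x) = w * (zH ^ k * x) := by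
  rw [← mul_assoc, zzz, mul_assoc]

/-- The key relation `y x = x y z⁻¹`. -/
lemma key_rel (i : Fin 18) : yH i * xH i = xH i * yH i * zH ^ (-1 : ℤ) := by
  have h1 : PresentedGroup.mk HRels (fx i * fy i * (fx i)⁻¹ * (fy i)⁻¹ * fz⁻¹) = 1 :=
    rel_one (Or.inr (Or.inr (Or.inr (Or.inl ⟨i, rfl⟩))))
  have h2 : xH i * yH i * (xH i)⁻¹ * (yH i)⁻¹ * zH⁻¹ = 1 := by
    rw [← h1]; simp only [map_mul, map_inv]; rfl
  have h3 : xH i * yH i * (xH i)⁻¹ * (yH i)⁻¹ = zH := by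
    rwa [mul_inv_eq_one] at h2
  have h4 : xH i * yH i = zH * (yH i * xH i) := by rw [← h3]; group
  have h5 : zH⁻¹ * (xH i * yH i) = yH i * xH i := by rw [h4]; group
  calc yH i * xH i = zH⁻¹ * (xH i * yH i) := h5.symm
    _ = (xH i * yH i) * zH⁻¹ := (z_comm _).inv_left.eq
    _ = xH i * yH i * zH ^ (-1 : ℤ) := by group

section swaps

lemma conj_mul {v u₁ u₂ : Hgrp} {k1 k2 : ℤ}
    (e1 : v * u₁ = u₁ * v * zH ^ k1) (e2 : v * u₂ = u₂ * v * zH ^ k2) :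
    v * (u₁ * u₂) = (u₁ * u₂) * v * zH ^ (k1 + k2) := by
  calc v * (u₁ * u₂) = (v * u₁) * u₂ := (mul_assoc _ _ _).symm
    _ = u₁ * v * zH ^ k1 * u₂ := by rw [e1]
    _ = (u₁ * v) * (u₂ * zH ^ k1) := by rw [mul_assoc (u₁ * v), zzz]
    _ = u₁ * (v * u₂) * zH ^ k1 := by group
    _ = u₁ * (u₂ * v * zH ^ k2) * zH ^ k1 := by rw [e2]
    _ = (u₁ * u₂) * v * zH ^ (k1 + k2) := by group

lemma conj_flip {v u : Hgrp} {k : ℤ} (e : v * u = u * v * zH ^ k) :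
    u * v = v * u * zH ^ (-k) := by
  rw [e]; group

lemma conj_inv {v u : Hgrp} {k : ℤ} (e : v * u = u * v * zH ^ k) :
    v * u⁻¹ = u⁻¹ * v * zH ^ (-k) := by
  have h2 : u⁻¹ * v = v * u⁻¹ * zH ^ k := by
    calc u⁻¹ * v = u⁻¹ * (v * u) * u⁻¹ := by group
      _ = u⁻¹ * (u * v * zH ^ k) * u⁻¹ := by rw [e]
      _ = v * (zH ^ k * u⁻¹) := by group
      _ = v * (u⁻¹ * zH ^ k) := by rw [zzz]
      _ = v * u⁻¹ * zH ^ k := (mul_assoc _ _ _).symm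
  rw [h2]; group

/-- subgroup generated by the `x`'s -/
def Sx : Subgroup Hgrp := Subgroup.closure (Set.range xH)
/-- subgroup generated by the `y`'s -/
def Sy : Subgroup Hgrp := Subgroup.closure (Set.range yH)

lemma swap : ∀ v ∈ Sy, ∀ u ∈ Sx, ∃ k : ℤ, v * u = u * v * zH ^ k := by
  intro v hv
  induction hv using Subgroup.closure_induction with
  | mem v hv =>
    obtain ⟨j, rfl⟩ := hv
    intro u hu
    induction hu using Subgroup.closure_induction with
    | mem u hu =>
      obtain ⟨i, rfl⟩ := hu
      rcases eq_or_ne i j with rfl | hij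
      · exact ⟨-1, key_rel i⟩
      · exact ⟨0, by rw [zpow_zero, mul_one]; exact ((xy_comm hij).symm).eq⟩
    | one => exact ⟨0, by simp⟩
    | mul u₁ u₂ _ _ h1 h2 =>
      obtain ⟨k1, e1⟩ := h1
      obtain ⟨k2, e2⟩ := h2
      exact ⟨k1 + k2, conj_mul e1 e2⟩
    | inv u _ h1 =>
      obtain ⟨k, e⟩ := h1
      exact ⟨-k, conj_inv e⟩
  | one => exact fun u _ => ⟨0, by simp⟩
  | mul v₁ v₂ _ _ h1 h2 =>
    intro u hu
    obtain ⟨k1, e1⟩ := h1 u hu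
    obtain ⟨k2, e2⟩ := h2 u hu
    exact ⟨_, conj_flip (conj_mul (conj_flip e1) (conj_flip e2))⟩
  | inv v _ h1 =>
    intro u hu
    obtain ⟨k, e⟩ := h1 u hu
    exact ⟨_, conj_flip (conj_inv (conj_flip e))⟩

end swaps


section phi

/-- hom from the free abelian group packaging all powers of `x`'s -/
def φX : (Fin 18 → Multiplicative ℤ) →* Hgrp :=
  MonoidHom.noncommPiCoprod (fun i => zpowersHom Hgrp (xH i))
    (fun i j _ m n => by
      simpa [zpowersHom_apply] using (xx_comm i j).zpow_zpow m.toAdd n.toAdd)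

def φY : (Fin 18 → Multiplicative ℤ) →* Hgrp :=
  MonoidHom.noncommPiCoprod (fun i => zpowersHom Hgrp (yH i))
    (fun i j _ m n => by
      simpa [zpowersHom_apply] using (yy_comm i j).zpow_zpow m.toAdd n.toAdd)

lemma φX_single (i : Fin 18) (m : Multiplicative ℤ) :
    φX (Pi.mulSingle i m) = xH i ^ m.toAdd := by
  rw [φX]; erw [MonoidHom.noncommPiCoprod_mulSingle]; rw [zpowersHom_apply]

lemma φY_single (i : Fin 18) (m : Multiplicative ℤ) :
    φY (Pi.mulSingle i m) = yH i ^ m.toAdd := by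
  rw [φY]; erw [MonoidHom.noncommPiCoprod_mulSingle]; rw [zpowersHom_apply]

lemma φX_mem (a : Fin 18 → Multiplicative ℤ) : φX a ∈ Sx := by
  show Finset.univ.noncommProd (fun i => zpowersHom Hgrp (xH i) (a i))
      (fun i _ j _ hij => (xx_comm i j).zpow_zpow _ _) ∈ Sx
  exact Subgroup.noncommProd_mem _ _
    (fun i _ => Subgroup.zpow_mem Sx (Subgroup.subset_closure (Set.mem_range_self i)) _)

lemma φY_mem (b : Fin 18 → Multiplicative ℤ) : φY b ∈ Sy := by
  show Finset.univ.noncommProd (fun i => zpowersHom Hgrp (yH i) (b i))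
      (fun i _ j _ hij => (yy_comm i j).zpow_zpow _ _) ∈ Sy
  exact Subgroup.noncommProd_mem _ _
    (fun i _ => Subgroup.zpow_mem Sy (Subgroup.subset_closure (Set.mem_range_self i)) _)

end phi

section nf

/-- the subgroup of elements in normal form -/
def NF : Subgroup Hgrp where
  carrier := {g | ∃ a b : Fin 18 → Multiplicative ℤ, ∃ c : ℤ, g = φX a * φY b * zH ^ c}
  one_mem' := ⟨1, 1, 0, by simp⟩
  mul_mem' := by
    rintro g h ⟨a, b, c, rfl⟩ ⟨a', b', c', rfl⟩
    obtain ⟨k, e⟩ := swap (φY b) (φY_mem b) (φX a') (φX_mem a')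
    refine ⟨a * a', b * b', c + c' + k, ?_⟩
    have e' : ∀ x : Hgrp, φY b * (φX a' * x) = φX a' * (φY b * (zH ^ k * x)) := by
      intro x
      rw [← mul_assoc, e, mul_assoc, mul_assoc]
    rw [map_mul, map_mul]
    simp only [mul_assoc]
    rw [zzz' c (φX a'), zzz' c (φY b'), e', zzz' k (φY b')]
    group
  inv_mem' := by
    rintro g ⟨a, b, c, rfl⟩
    obtain ⟨k, e⟩ := swap (φY b⁻¹) (φY_mem b⁻¹) (φX a⁻¹) (φX_mem a⁻¹)
    rw [map_inv, map_inv] at e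
    refine ⟨a⁻¹, b⁻¹, k + -c, ?_⟩
    rw [map_inv, map_inv]
    calc (φX a * φY b * zH ^ c)⁻¹ = zH ^ (-c) * ((φY b)⁻¹ * (φX a)⁻¹) := by group
      _ = ((φY b)⁻¹ * (φX a)⁻¹) * zH ^ (-c) := zzz _ _
      _ = ((φX a)⁻¹ * (φY b)⁻¹ * zH ^ k) * zH ^ (-c) := by rw [e]
      _ = (φX a)⁻¹ * (φY b)⁻¹ * zH ^ (k + -c) := by group

lemma normal_form (g : Hgrp) :
    ∃ a b : Fin 18 → Multiplicative ℤ, ∃ c : ℤ, g = φX a * φY b * zH ^ c := by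
  refine PresentedGroup.generated_by HRels NF (fun j => ?_) g
  cases j with
  | x i =>
    refine ⟨Pi.mulSingle i (Multiplicative.ofAdd 1), 1, 0, ?_⟩
    rw [φX_single]
    simp only [map_one, zpow_zero, mul_one, toAdd_ofAdd, zpow_one]
    rfl
  | y i =>
    refine ⟨1, Pi.mulSingle i (Multiplicative.ofAdd 1), 0, ?_⟩
    rw [φY_single]
    simp only [map_one, zpow_zero, mul_one, one_mul, toAdd_ofAdd, zpow_one]
    rfl
  | z =>
    refine ⟨1, 1, 1, ?_⟩
    rw [map_one, map_one, one_mul, one_mul, zpow_one]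
    rfl

end nf

section proj

/-- first coordinate projection of `Heis`, as a hom to the (multiplicative) free abelian group -/
def πX : Heis →* (Fin 18 → Multiplicative ℤ) where
  toFun p := fun i => Multiplicative.ofAdd (p.a i)
  map_one' := rfl
  map_mul' p q := rfl

def πY : Heis →* (Fin 18 → Multiplicative ℤ) where
  toFun p := fun i => Multiplicative.ofAdd (p.b i)
  map_one' := rfl
  map_mul' p q := rfl

lemma πX_heis_x (i : Fin 18) : πX ⟨ee i, 0, 0⟩ = Pi.mulSingle i (Multiplicative.ofAdd 1) := by
  funext k
  show Multiplicative.ofAdd (ee i k) = _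
  rw [ee, Pi.single_apply, Pi.mulSingle_apply]
  split_ifs <;> rfl

lemma πY_heis_y (i : Fin 18) : πY ⟨0, ee i, 0⟩ = Pi.mulSingle i (Multiplicative.ofAdd 1) := by
  funext k
  show Multiplicative.ofAdd (ee i k) = _
  rw [ee, Pi.single_apply, Pi.mulSingle_apply]
  split_ifs <;> rfl

lemma πX_ψ_φX (a : Fin 18 → Multiplicative ℤ) : πX (ψ (φX a)) = a := by
  have h : πX.comp (ψ.comp φX) = MonoidHom.id _ := by
    refine MonoidHom.functions_ext _ _ _ (fun i m => ?_)
    simp only [MonoidHom.comp_apply, MonoidHom.id_apply]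
    rw [φX_single, map_zpow, map_zpow, ψ_x, πX_heis_x, ← Pi.mulSingle_zpow]
    congr 1
    rw [← ofAdd_zsmul, smul_eq_mul, mul_one, ofAdd_toAdd]
  exact DFunLike.congr_fun h a

lemma πY_ψ_φY (b : Fin 18 → Multiplicative ℤ) : πY (ψ (φY b)) = b := by
  have h : πY.comp (ψ.comp φY) = MonoidHom.id _ := by
    refine MonoidHom.functions_ext _ _ _ (fun i m => ?_)
    simp only [MonoidHom.comp_apply, MonoidHom.id_apply]
    rw [φY_single, map_zpow, map_zpow, ψ_y, πY_heis_y, ← Pi.mulSingle_zpow]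
    congr 1
    rw [← ofAdd_zsmul, smul_eq_mul, mul_one, ofAdd_toAdd]
  exact DFunLike.congr_fun h b

lemma πX_ψ_φY (b : Fin 18 → Multiplicative ℤ) : πX (ψ (φY b)) = 1 := by
  have h : πX.comp (ψ.comp φY) = 1 := by
    refine MonoidHom.functions_ext _ _ _ (fun i m => ?_)
    simp only [MonoidHom.comp_apply, MonoidHom.one_apply]
    rw [φY_single, map_zpow, map_zpow, ψ_y]
    have : πX (⟨0, ee i, 0⟩ : Heis) = 1 := rfl
    rw [this, one_zpow]
  exact DFunLike.congr_fun h b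

lemma πY_ψ_φX (a : Fin 18 → Multiplicative ℤ) : πY (ψ (φX a)) = 1 := by
  have h : πY.comp (ψ.comp φX) = 1 := by
    refine MonoidHom.functions_ext _ _ _ (fun i m => ?_)
    simp only [MonoidHom.comp_apply, MonoidHom.one_apply]
    rw [φX_single, map_zpow, map_zpow, ψ_x]
    have : πY (⟨ee i, 0, 0⟩ : Heis) = 1 := rfl
    rw [this, one_zpow]
  exact DFunLike.congr_fun h a

lemma πX_ψ_z : πX (ψ zH) = 1 := by rw [ψ_z]; rfl
lemma πY_ψ_z : πY (ψ zH) = 1 := by rw [ψ_z]; rfl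

end proj

end HCenterProof

namespace HCenterProof

set_option maxHeartbeats 1000000 in
lemma center_le : Subgroup.center Hgrp ≤ Subgroup.closure {zH} := by
  intro g hg
  obtain ⟨a, b, c, hgeq⟩ := normal_form g
  have hmc := Subgroup.mem_center_iff.mp hg
  -- the `a`-coordinate of `ψ g` vanishes
  have hA : ∀ i, (ψ g).a i = 0 := by
    intro i
    have h := hmc (yH i)
    have h2 : (ψ (yH i) * ψ g).c = (ψ g * ψ (yH i)).c := by
      rw [← map_mul, ← map_mul, h]
    rw [ψ_y] at h2
    simpa [Heis.mul_def, dd_zero_left, dd_ee_right] using h2.symm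
  have hB : ∀ i, (ψ g).b i = 0 := by
    intro i
    have h := hmc (xH i)
    have h2 : (ψ (xH i) * ψ g).c = (ψ g * ψ (xH i)).c := by
      rw [← map_mul, ← map_mul, h]
    rw [ψ_x] at h2
    simpa [Heis.mul_def, dd_zero_right, dd_ee_left] using h2
  have ha : a = 1 := by
    have h1 : πX (ψ g) = a := by
      rw [hgeq, map_mul, map_mul, map_mul, map_mul, map_zpow, map_zpow,
        πX_ψ_φX, πX_ψ_φY, πX_ψ_z, mul_one, one_zpow, mul_one]
    rw [← h1]
    funext i
    show Multiplicative.ofAdd ((ψ g).a i) = 1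
    rw [hA i]
    rfl
  have hb : b = 1 := by
    have h1 : πY (ψ g) = b := by
      rw [hgeq, map_mul, map_mul, map_mul, map_mul, map_zpow, map_zpow,
        πY_ψ_φX, πY_ψ_φY, πY_ψ_z, one_mul, one_zpow, mul_one]
    rw [← h1]
    funext i
    show Multiplicative.ofAdd ((ψ g).b i) = 1
    rw [hB i]
    rfl
  have : g = zH ^ c := by rw [hgeq, ha, hb, map_one, map_one, one_mul, one_mul]
  rw [this]
  exact Subgroup.zpow_mem _ (Subgroup.subset_closure (Set.mem_singleton _)) c

end HCenterProof


/-- The center of `H` is exactly the subgroup generated by `z`. -/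
theorem stmt10 : Subgroup.center Hgrp = Subgroup.closure {zH} := by
  apply le_antisymm
  · exact HCenterProof.center_le
  · rw [Subgroup.closure_le]
    intro w hw
    rw [Set.mem_singleton_iff] at hw
    subst hw
    exact Subgroup.mem_center_iff.mpr fun g => (HCenterProof.z_comm g).eq.symm
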